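/- Let X be a separable metric space, let A ⊆ X be a bounded subset, let k ≥ 1 be an integer, and let C ≥ 0. Suppose that for every countable family {B̄(a_i, r_i)}_{i∈I} of pairwise disjoint closed balls with centers a_i ∈ A and radii 0 < r_i ≤ 1, one has ∑_{i∈I} r_i^k ≤ C. Then the k-dimensional Hausdorff measure of A satisfies H^k(A) ≤ 4^k · C. -/

import Mathlib

open scoped ENNReal
open MeasureTheory

/-- Transfer the packing hypothesis from `Type 0` indexing to arbitrary-universe
countable indexing. -/
lemma packing_bound_univ
    {X : Type*} [MetricSpace X] {A : Set X} {k : ℕ} {C : ℝ}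
    (hpack : ∀ (ι : Type) [Countable ι], ∀ (a : ι → X) (r : ι → ℝ),
      (∀ i, a i ∈ A) → (∀ i, 0 < r i) → (∀ i, r i ≤ 1) →
      (Pairwise fun i j =>
        Disjoint (Metric.closedBall (a i) (r i)) (Metric.closedBall (a j) (r j))) →
      ∑' i, ENNReal.ofReal (r i ^ k) ≤ ENNReal.ofReal C)
    {ι' : Type*} [Countable ι'] (a : ι' → X) (r : ι' → ℝ)
    (ha : ∀ i, a i ∈ A) (hr0 : ∀ i, 0 < r i) (hr1 : ∀ i, r i ≤ 1)
    (hd : Pairwise fun i j =>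
        Disjoint (Metric.closedBall (a i) (r i)) (Metric.closedBall (a j) (r j))) :
    ∑' i, ENNReal.ofReal (r i ^ k) ≤ ENNReal.ofReal C := by
  obtain ⟨f, hf⟩ := exists_injective_nat ι'
  let e : ι' ≃ Set.range f := Equiv.ofInjective f hf
  have key := hpack (Set.range f) (a ∘ e.symm) (r ∘ e.symm)
    (fun i => ha _) (fun i => hr0 _) (fun i => hr1 _)
    (fun i j hij => hd (e.symm.injective.ne hij))
  calc ∑' i, ENNReal.ofReal (r i ^ k)
      = ∑' j : Set.range f, ENNReal.ofReal (r (e.symm j) ^ k) := by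
        exact (e.symm.tsum_eq fun i => ENNReal.ofReal (r i ^ k)).symm
    _ ≤ ENNReal.ofReal C := key

/-- Existence of a maximal `2δ`-separated subset of `A`; its `2δ`-closed balls
cover `A`. -/
lemma exists_maximal_separated
    {X : Type*} [MetricSpace X] (A : Set X) {δ : ℝ} (hδ : 0 < δ) :
    ∃ S : Set X, S ⊆ A ∧ S.Pairwise (fun x y => 2 * δ < dist x y) ∧
      A ⊆ ⋃ s ∈ S, Metric.closedBall s (2 * δ) := by
  set 𝒮 : Set (Set X) := {S | S ⊆ A ∧ S.Pairwise (fun x y => 2 * δ < dist x y)} with h𝒮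
  obtain ⟨S, hS⟩ := zorn_subset 𝒮 (by
    intro c hc hchain
    refine ⟨⋃₀ c, ⟨?_, ?_⟩, fun s hs => Set.subset_sUnion_of_mem hs⟩
    · exact Set.sUnion_subset fun s hs => (hc hs).1
    · intro x hx y hy hxy
      obtain ⟨s, hs, hxs⟩ := hx
      obtain ⟨t, ht, hyt⟩ := hy
      rcases hchain.total hs ht with h | h
      · exact (hc ht).2 (h hxs) hyt hxy
      · exact (hc hs).2 hxs (h hyt) hxy)
  refine ⟨S, hS.prop.1, hS.prop.2, ?_⟩
  intro a ha
  by_contra hcov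
  simp only [Set.mem_iUnion, Metric.mem_closedBall, not_exists, not_le] at hcov
  have haS : a ∉ S := fun h => absurd (hcov a h) (by rw [dist_self]; simp; linarith)
  have : insert a S ∈ 𝒮 := by
    constructor
    · exact Set.insert_subset ha hS.prop.1
    · refine hS.prop.2.insert fun y hy hay => ?_
      have := hcov y hy
      constructor
      · exact this
      · rwa [dist_comm]
  have := hS.2 ⟨this.1, this.2⟩ (Set.subset_insert a S)
  exact haS (this (Set.mem_insert a S))

/-- **Lemma (Hausdorff measure bound from a packing estimate).**
Let `X` be a separable metric space, `A ⊆ X` bounded, `k ≥ 1`, `C ≥ 0`.  If every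
countable family of pairwise disjoint closed balls with centers in `A` and radii in
`(0, 1]` satisfies `∑ i, (r i)^k ≤ C`, then `H^k(A) ≤ 4^k · C`. -/
theorem hausdorffMeasure_le_of_packing_bound
    {X : Type*} [MetricSpace X] [TopologicalSpace.SeparableSpace X]
    [MeasurableSpace X] [BorelSpace X]
    {A : Set X} (hA : Bornology.IsBounded A)
    {k : ℕ} (hk : 1 ≤ k) {C : ℝ} (hC : 0 ≤ C)
    (hpack : ∀ (ι : Type) [Countable ι], ∀ (a : ι → X) (r : ι → ℝ),
      (∀ i, a i ∈ A) → (∀ i, 0 < r i) → (∀ i, r i ≤ 1) →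
      (Pairwise fun i j =>
        Disjoint (Metric.closedBall (a i) (r i)) (Metric.closedBall (a j) (r j))) →
      ∑' i, ENNReal.ofReal (r i ^ k) ≤ ENNReal.ofReal C) :
    μH[(k : ℝ)] A ≤ ENNReal.ofReal (4 ^ k * C) := by
  -- radii sequence δ n = 1/(n+1)
  set δ : ℕ → ℝ := fun n => 1 / (n + 1) with hδdef
  have hδ0 : ∀ n, 0 < δ n := fun n => by positivity
  have hδ1 : ∀ n, δ n ≤ 1 := fun n => by
    rw [hδdef]
    rw [div_le_one (by positivity)]
    linarith [Nat.cast_nonneg (α := ℝ) n]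
  -- maximal separated sets and their properties
  have hsep := fun n => exists_maximal_separated A (hδ0 n)
  choose S hSA hSsep hScov using hsep
  have hScnt : ∀ n, (S n).Countable := by
    intro n
    refine Set.PairwiseDisjoint.countable_of_nonempty_interior
      (s := fun x => Metric.closedBall x (δ n)) (a := S n) ?_ ?_
    · intro x hx y hy hxy
      exact Metric.closedBall_disjoint_closedBall
        (by have := hSsep n hx hy hxy; linarith)
    · intro x hx
      exact (Metric.nonempty_ball.2 (hδ0 n)).mono Metric.ball_subset_interior_closedBall
  -- the packing bound applied to the separated sets
  have hSsum : ∀ n, ∑' _ : S n, ENNReal.ofReal (δ n ^ k) ≤ ENNReal.ofReal C := by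
    intro n
    have : Countable (S n) := (hScnt n).to_subtype
    refine packing_bound_univ hpack (fun x : S n => (x : X)) (fun _ => δ n)
      (fun i => hSA n i.2) (fun _ => hδ0 n) (fun _ => hδ1 n) ?_
    intro i j hij
    exact Metric.closedBall_disjoint_closedBall
      (by have := hSsep n i.2 j.2 (Subtype.coe_injective.ne hij); linarith)
  -- apply the covering formula for Hausdorff measure
  haveI : ∀ n : ℕ, Countable (S n) := fun n => (hScnt n).to_subtype
  have hmain :=
    Measure.hausdorffMeasure_le_liminf_tsum (ι := fun n => S n) (k : ℝ) A
      (l := Filter.atTop) (fun n => ENNReal.ofReal (4 * δ n))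
      (by
        have : Filter.Tendsto (fun n : ℕ => 4 * δ n) Filter.atTop (nhds 0) := by
          have := tendsto_one_div_add_atTop_nhds_zero_nat (𝕜 := ℝ)
          simpa [hδdef, one_div] using this.const_mul 4
        simpa using (ENNReal.tendsto_ofReal this))
      (fun n i => Metric.closedBall (i : X) (2 * δ n))
      (by
        refine Filter.Eventually.of_forall fun n => fun i => ?_
        refine EMetric.diam_le fun x hx y hy => ?_
        rw [edist_dist]
        refine ENNReal.ofReal_le_ofReal ?_
        have hx' : dist x (i : X) ≤ 2 * δ n := hx
        have hy' : dist y (i : X) ≤ 2 * δ n := hy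
        calc dist x y ≤ dist x (i : X) + dist (i : X) y := dist_triangle _ _ _
          _ ≤ 2 * δ n + 2 * δ n := by rw [dist_comm (i : X) y]; linarith
          _ = 4 * δ n := by ring)
      (by
        refine Filter.Eventually.of_forall fun n => fun a ha => ?_
        obtain ⟨s, hs, has⟩ := Set.mem_iUnion₂.1 (hScov n ha)
        exact Set.mem_iUnion.2 ⟨⟨s, hs⟩, has⟩)
  refine hmain.trans ?_
  have hterm : ∀ n : ℕ,
      (∑' i : S n, EMetric.diam (Metric.closedBall (i : X) (2 * δ n)) ^ (k : ℝ))
        ≤ ENNReal.ofReal (4 ^ k * C) := by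
    intro n
    have hdiam : ∀ i : S n,
        EMetric.diam (Metric.closedBall (i : X) (2 * δ n)) ≤ ENNReal.ofReal (4 * δ n) := by
      intro i
      refine EMetric.diam_le fun x hx y hy => ?_
      rw [edist_dist]
      refine ENNReal.ofReal_le_ofReal ?_
      have hx' : dist x (i : X) ≤ 2 * δ n := hx
      have hy' : dist y (i : X) ≤ 2 * δ n := hy
      calc dist x y ≤ dist x (i : X) + dist (i : X) y := dist_triangle _ _ _
        _ ≤ 2 * δ n + 2 * δ n := by rw [dist_comm (i : X) y]; linarith
        _ = 4 * δ n := by ring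
    calc (∑' i : S n, EMetric.diam (Metric.closedBall (i : X) (2 * δ n)) ^ (k : ℝ))
        ≤ ∑' _ : S n, ENNReal.ofReal (4 * δ n) ^ (k : ℝ) := by
          refine ENNReal.tsum_le_tsum fun i => ?_
          exact ENNReal.rpow_le_rpow (hdiam i) (by positivity)
      _ = ∑' _ : S n, ENNReal.ofReal (4 ^ k) * ENNReal.ofReal (δ n ^ k) := by
          congr 1
          ext i
          rw [ENNReal.rpow_natCast, ← ENNReal.ofReal_pow (by positivity),
            mul_pow, ENNReal.ofReal_mul (by positivity)]
      _ = ENNReal.ofReal (4 ^ k) * ∑' _ : S n, ENNReal.ofReal (δ n ^ k) :=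
          ENNReal.tsum_mul_left
      _ ≤ ENNReal.ofReal (4 ^ k) * ENNReal.ofReal C :=
          mul_le_mul_right (hSsum n) _
      _ = ENNReal.ofReal (4 ^ k * C) := (ENNReal.ofReal_mul (by positivity)).symm
  calc Filter.liminf
        (fun n => ∑' i : S n, EMetric.diam (Metric.closedBall (i : X) (2 * δ n)) ^ (k : ℝ))
        Filter.atTop
      ≤ Filter.liminf (fun _ : ℕ => ENNReal.ofReal (4 ^ k * C)) Filter.atTop :=
        Filter.liminf_le_liminf (Filter.Eventually.of_forall hterm)
    _ = ENNReal.ofReal (4 ^ k * C) := Filter.liminf_const _
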